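/- In stratified resampling with residual weights: let $p_1,\dots,p_K$ be nonnegative numbers with $\sum_j p_j = n$ for a positive integer $n$ and each $p_j \le 1$. Let $Q_0 = 0$, $Q_i = \sum_{j \le i} p_j$, draw $U_1$ uniformly on $[0,1]$ and set $U_k = U_1 + (k-1)$ for $k = 2,\dots,n$. Declare index $i$ a survivor if there exists $k$ with $Q_{i-1} < U_k \le Q_i$. Then (a) exactly $n$ indices survive almost surely, and (b) the probability that index $i$ survives equals $p_i$. -/
import Mathlib


open MeasureTheory Set

lemma iUnion_Ioc_range' (n : ℕ) :
    (⋃ k ∈ Finset.range n, Set.Ioc (k : ℝ) (k + 1)) = Set.Ioc (0 : ℝ) n := by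
  induction n with
  | zero => simp
  | succ m ih =>
    rw [Finset.range_add_one, Finset.set_biUnion_insert, ih, Set.union_comm]
    push_cast
    exact Set.Ioc_union_Ioc_eq_Ioc (by positivity) (by linarith [Nat.cast_nonneg (α := ℝ) m])

lemma measure_strata' (n : ℕ) (a b : ℝ) (ha : 0 ≤ a) (hb : b ≤ n)
    (hab : a ≤ b) (h1 : b ≤ a + 1) :
    volume.restrict (Set.Icc (0 : ℝ) 1)
      {u : ℝ | ∃ k ∈ Finset.range n, a < u + k ∧ u + k ≤ b}
      = ENNReal.ofReal (b - a) := by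
  have hS : {u : ℝ | ∃ k ∈ Finset.range n, a < u + k ∧ u + k ≤ b}
      = ⋃ k ∈ Finset.range n, Set.Ioc (a - k) (b - k) := by
    ext u
    simp only [Set.mem_setOf_eq, Set.mem_iUnion, Set.mem_Ioc, Finset.mem_range,
      sub_lt_iff_lt_add, le_sub_iff_add_le, exists_prop]
  rw [hS, Measure.restrict_apply' measurableSet_Icc]
  have hIoc : volume ((⋃ k ∈ Finset.range n, Set.Ioc (a - k) (b - k)) ∩ Set.Icc (0:ℝ) 1)
      = volume ((⋃ k ∈ Finset.range n, Set.Ioc (a - k) (b - k)) ∩ Set.Ioc (0:ℝ) 1) := by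
    apply measure_congr
    exact (MeasureTheory.ae_eq_set_inter (Filter.EventuallyEq.refl _ _) Ioc_ae_eq_Icc).symm
  rw [hIoc, Set.iUnion₂_inter]
  rw [measure_biUnion_finset ?_ (fun k _ => ((measurableSet_Ioc).inter measurableSet_Ioc))]
  · -- each term equals volume (Ioc a b ∩ Ioc k (k+1)), then re-sum
    have hterm : ∀ k ∈ Finset.range n,
        volume (Set.Ioc (a - k) (b - k) ∩ Set.Ioc (0:ℝ) 1)
          = volume (Set.Ioc a b ∩ Set.Ioc (k:ℝ) (k + 1)) := by
      intro k _
      rw [Set.Ioc_inter_Ioc, Set.Ioc_inter_Ioc, Real.volume_Ioc, Real.volume_Ioc]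
      congr 1
      have h2 : min (b - k) 1 = min b (k + 1) - k := by
        rcases le_total b (k + 1) with h | h
        · rw [min_eq_left (by linarith), min_eq_left h]
        · rw [min_eq_right (by linarith), min_eq_right h]; ring
      have h3 : max (a - k) 0 = max a k - k := by
        rcases le_total a k with h | h
        · rw [max_eq_right (by linarith), max_eq_right h]; ring
        · rw [max_eq_left (by linarith), max_eq_left h]
      rw [h2, h3]; ring
    rw [Finset.sum_congr rfl hterm]
    rw [← measure_biUnion_finset ?_ (fun k _ => ((measurableSet_Ioc).inter measurableSet_Ioc))]
    · rw [← Set.inter_iUnion₂, iUnion_Ioc_range' n,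
        Set.inter_eq_left.mpr (Set.Ioc_subset_Ioc ha hb), Real.volume_Ioc]
    · -- pairwise disjoint: Ioc k (k+1) are disjoint
      intro k hk k' hk' hne
      simp only [Function.onFun]
      apply Set.disjoint_left.mpr
      rintro u ⟨⟨hu1, hu2⟩, hu3, hu4⟩ ⟨⟨hu1', hu2'⟩, hu3', hu4'⟩
      rcases lt_or_gt_of_ne (fun h : (k:ℝ) = k' => hne (by exact_mod_cast h)) with h | h
      · have : (k:ℝ) + 1 ≤ k' := by exact_mod_cast Nat.succ_le_of_lt (by exact_mod_cast h)
        linarith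
      · have : (k':ℝ) + 1 ≤ k := by exact_mod_cast Nat.succ_le_of_lt (by exact_mod_cast h)
        linarith
  · -- pairwise disjoint of translated intervals
    intro k hk k' hk' hne
    simp only [Function.onFun]
    apply Set.disjoint_left.mpr
    rintro u ⟨⟨hu1, hu2⟩, hu3, hu4⟩ ⟨⟨hu1', hu2'⟩, hu3', hu4'⟩
    rcases lt_or_gt_of_ne (fun h : (k:ℝ) = k' => hne (by exact_mod_cast h)) with h | h
    · have : (k:ℝ) + 1 ≤ k' := by exact_mod_cast Nat.succ_le_of_lt (by exact_mod_cast h)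
      -- a - k < u ≤ b - k and a - k' < u ≤ b - k', b ≤ a + 1
      linarith
    · have : (k':ℝ) + 1 ≤ k := by exact_mod_cast Nat.succ_le_of_lt (by exact_mod_cast h)
      linarith

def Qc (K : ℕ) (p : Fin K → ℝ) (m : ℕ) : ℝ :=
  ∑ j ∈ Finset.univ.filter (fun j : Fin K => (j : ℕ) < m), p j

lemma Qc_mono {K : ℕ} {p : Fin K → ℝ} (hp0 : ∀ j, 0 ≤ p j) : Monotone (Qc K p) := by
  intro m m' h
  apply Finset.sum_le_sum_of_subset_of_nonneg
  · intro j hj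
    simp only [Finset.mem_filter, Finset.mem_univ, true_and] at hj ⊢
    omega
  · exact fun j _ _ => hp0 j

lemma Qc_zero {K : ℕ} {p : Fin K → ℝ} : Qc K p 0 = 0 := by
  simp [Qc]

lemma Qc_top {K : ℕ} {p : Fin K → ℝ} : Qc K p K = ∑ j, p j := by
  unfold Qc
  rw [Finset.filter_true_of_mem (fun j _ => j.isLt)]

lemma Qc_step {K : ℕ} {p : Fin K → ℝ} (i : Fin K) :
    Qc K p ((i : ℕ) + 1) = Qc K p i + p i := by
  unfold Qc
  have : Finset.univ.filter (fun j : Fin K => (j : ℕ) < (i : ℕ) + 1)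
      = insert i (Finset.univ.filter (fun j : Fin K => (j : ℕ) < (i : ℕ))) := by
    ext j
    simp only [Finset.mem_filter, Finset.mem_univ, true_and, Finset.mem_insert,
      Nat.lt_succ_iff_lt_or_eq, ← Fin.val_eq_val]
    tauto
  rw [this, Finset.sum_insert (by simp)]
  ring

lemma exists_idx {K : ℕ} {p : Fin K → ℝ} (hp0 : ∀ j, 0 ≤ p j) (hK : 0 < K)
    (x : ℝ) (hx : 0 < x) (hxn : x ≤ Qc K p K) :
    ∃ i : Fin K, Qc K p i < x ∧ x ≤ Qc K p ((i : ℕ) + 1) := by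
  classical
  have hP : ∃ m, x ≤ Qc K p (m + 1) := ⟨K - 1, by rwa [Nat.sub_add_cancel hK]⟩
  have hi0K : Nat.find hP < K := by
    have := Nat.find_le (h := hP) (show x ≤ Qc K p ((K - 1) + 1) by rwa [Nat.sub_add_cancel hK])
    omega
  refine ⟨⟨Nat.find hP, hi0K⟩, ?_, Nat.find_spec hP⟩
  rcases Nat.eq_zero_or_pos (Nat.find hP) with h | h
  · simpa [h, Qc_zero] using hx
  · have h2 := Nat.find_min hP (m := Nat.find hP - 1) (by omega)
    push_neg at h2
    have : Nat.find hP - 1 + 1 = Nat.find hP := by omega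
    rw [this] at h2
    exact h2

lemma unique_idx {K : ℕ} {p : Fin K → ℝ} (hp0 : ∀ j, 0 ≤ p j) {i i' : Fin K} {x : ℝ}
    (h1 : Qc K p i < x) (h2 : x ≤ Qc K p ((i : ℕ) + 1))
    (h1' : Qc K p i' < x) (h2' : x ≤ Qc K p ((i' : ℕ) + 1)) : i = i' := by
  by_contra hne
  rcases Nat.lt_or_ge (i : ℕ) (i' : ℕ) with h | h
  · have := Qc_mono hp0 (show (i : ℕ) + 1 ≤ (i' : ℕ) from h)
    linarith
  · have h' : (i' : ℕ) < (i : ℕ) := by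
      rcases Nat.lt_or_ge (i' : ℕ) (i : ℕ) with h' | h'
      · exact h'
      · exact absurd (Fin.ext (le_antisymm h h')) (Ne.symm hne)
    have := Qc_mono hp0 (show (i' : ℕ) + 1 ≤ (i : ℕ) from h')
    linarith

/-- Stratified resampling with residual inclusion probabilities `p j ∈ [0,1]`
summing to a positive integer `n`: with `Q` the cumulative sums, `U₁` uniform on
`[0,1]` and `U_k = U₁ + (k-1)`, declaring `i` a survivor when some `U_k` falls
in `(Q_{i-1}, Q_i]`, (a) exactly `n` indices survive almost surely and (b) the
probability that index `i` survives equals `p i`. -/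
theorem stratified_resampling_card_and_inclusion
    (K n : ℕ) (hn : 0 < n) (p : Fin K → ℝ)
    (hp0 : ∀ j, 0 ≤ p j) (hp1 : ∀ j, p j ≤ 1)
    (hsum : ∑ j, p j = (n : ℝ)) :
    (∀ᵐ u ∂(volume.restrict (Set.Icc (0 : ℝ) 1)),
      Nat.card {i : Fin K // ∃ k ∈ Finset.range n,
        (∑ j ∈ Finset.univ.filter fun j : Fin K => (j : ℕ) < (i : ℕ), p j) < u + k ∧
        u + k ≤ ∑ j ∈ Finset.univ.filter fun j : Fin K => (j : ℕ) < (i : ℕ) + 1, p j} = n) ∧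
    ∀ i : Fin K,
      (volume.restrict (Set.Icc (0 : ℝ) 1)) {u : ℝ | ∃ k ∈ Finset.range n,
        (∑ j ∈ Finset.univ.filter fun j : Fin K => (j : ℕ) < (i : ℕ), p j) < u + k ∧
        u + k ≤ ∑ j ∈ Finset.univ.filter fun j : Fin K => (j : ℕ) < (i : ℕ) + 1, p j}
      = ENNReal.ofReal (p i) := by
  classical
  have hQtop : Qc K p K = (n : ℝ) := by rw [Qc_top, hsum]
  have hK : 0 < K := by
    rcases Nat.eq_zero_or_pos K with h | h
    · exfalso
      subst h
      simp only [Finset.univ_eq_empty, Finset.sum_empty] at hsum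
      have : n = 0 := by exact_mod_cast hsum.symm
      omega
    · exact h
  have hQnonneg : ∀ m, 0 ≤ Qc K p m := fun m => Qc_zero (p := p) ▸ Qc_mono hp0 (Nat.zero_le m)
  constructor
  · -- part (a)
    have h1 : ∀ᵐ u ∂(volume.restrict (Set.Icc (0:ℝ) 1)), u ∈ Set.Icc (0:ℝ) 1 :=
      ae_restrict_mem measurableSet_Icc
    have h2 : ∀ᵐ u ∂(volume.restrict (Set.Icc (0:ℝ) 1)), u ≠ 0 := by
      apply ae_restrict_of_ae
      rw [ae_iff]
      simpa using measure_singleton (0 : ℝ)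
    filter_upwards [h1, h2] with u hu hu0
    have hu1 : 0 < u := lt_of_le_of_ne hu.1 (Ne.symm hu0)
    have hu2 : u ≤ 1 := hu.2
    show Nat.card {i : Fin K // ∃ k ∈ Finset.range n,
        Qc K p i < u + k ∧ u + k ≤ Qc K p ((i : ℕ) + 1)} = n
    have hex : ∀ k : Fin n, ∃ i : Fin K,
        Qc K p i < u + (k : ℕ) ∧ u + (k : ℕ) ≤ Qc K p ((i : ℕ) + 1) := by
      intro k
      apply exists_idx hp0 hK
      · positivity
      · rw [hQtop]
        have : ((k : ℕ) : ℝ) + 1 ≤ (n : ℝ) := by exact_mod_cast Nat.succ_le_of_lt k.isLt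
        linarith
    choose f hf1 hf2 using hex
    have hfinj : Function.Injective f := by
      intro k k' hfe
      by_contra hne
      have hQs := Qc_step (p := p) (f k)
      have hkp := hp1 (f k)
      have hf1' := hf1 k'
      have hf2' := hf2 k'
      rw [← hfe] at hf1' hf2'
      rcases Nat.lt_or_ge (k : ℕ) (k' : ℕ) with h | h
      · have : ((k : ℕ) : ℝ) + 1 ≤ ((k' : ℕ) : ℝ) := by exact_mod_cast h
        have := hf1 k
        have := hf2 k
        linarith
      · have h' : (k' : ℕ) < (k : ℕ) := by
          rcases Nat.lt_or_ge (k' : ℕ) (k : ℕ) with h' | h'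
          · exact h'
          · exact absurd (Fin.ext (le_antisymm h h')) (Ne.symm hne)
        have : ((k' : ℕ) : ℝ) + 1 ≤ ((k : ℕ) : ℝ) := by exact_mod_cast h'
        have := hf1 k
        have := hf2 k
        linarith
    let F : Fin n → {i : Fin K // ∃ k ∈ Finset.range n,
        Qc K p i < u + k ∧ u + k ≤ Qc K p ((i : ℕ) + 1)} :=
      fun k => ⟨f k, ⟨(k : ℕ), Finset.mem_range.mpr k.isLt, hf1 k, hf2 k⟩⟩
    have hF : Function.Bijective F := by
      constructor
      · intro k k' h
        exact hfinj (congrArg Subtype.val h)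
      · rintro ⟨i, k, hk, hik1, hik2⟩
        refine ⟨⟨k, Finset.mem_range.mp hk⟩, ?_⟩
        apply Subtype.ext
        exact unique_idx hp0 (hf1 _) (hf2 _) hik1 hik2
    have := Nat.card_eq_of_bijective F hF
    simpa using this.symm
  · -- part (b)
    intro i
    have hb0 : Qc K p ((i : ℕ) + 1) = Qc K p i + p i := Qc_step i
    have ha : 0 ≤ Qc K p i := hQnonneg _
    have hbn : Qc K p ((i : ℕ) + 1) ≤ (n : ℝ) := by
      rw [← hQtop]
      exact Qc_mono hp0 i.isLt
    have key := measure_strata' n (Qc K p i) (Qc K p ((i : ℕ) + 1)) ha hbn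
      (by rw [hb0]; linarith [hp0 i]) (by rw [hb0]; linarith [hp1 i])
    have hdiff : Qc K p ((i : ℕ) + 1) - Qc K p i = p i := by rw [hb0]; ring
    rw [hdiff] at key
    exact key
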